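/- Let E be a directed graph with a vertex v at which there is exactly one closed simple path λ, and let w be any vertex lying on λ (i.e., w = s(e_i) for some edge e_i of λ = e₁⋯eₙ). If f is an edge with s(f) = w and f is not an edge of λ, then r(f) does not lie on λ; i.e., r(f) ∉ {s(e₁), …, s(eₙ)}. -/

import Mathlib

/-- A path in a directed graph with edge set `E`, vertex set `V` and
source/range maps `s r : E → V` is a list of edges in which consecutive edges
are composable. -/
def IsGraphPath {V E : Type*} (s r : E → V) (es : List E) : Prop :=
  es.Chain' fun e f => r e = s f

/-- A closed path based at `v`: a nonempty path starting and ending at `v`. -/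
structure IsClosedPath {V E : Type*} (s r : E → V) (v : V) (es : List E) : Prop where
  ne : es ≠ []
  path : IsGraphPath s r es
  src : ∀ h : es ≠ [], s (es.head h) = v
  rng : ∀ h : es ≠ [], r (es.getLast h) = v

/-- A closed simple path based at `v`: a closed path `e₁⋯eₙ` based at `v` such
that `s eᵢ ≠ v` for `i = 2, …, n`. -/
def IsClosedSimplePath {V E : Type*} (s r : E → V) (v : V) (es : List E) : Prop :=
  IsClosedPath s r v es ∧ ∀ i (h : i < es.length), 0 < i → s es[i] ≠ v

/-- Let `l = e₁⋯eₙ` be the unique closed simple path based at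
`v`, let `w = s eᵢ` be a vertex on `l`, and let `f` be an edge with `s f = w`
that is not an edge of `l`. Then `r f` does not lie on `l`:
`r f ∉ {s e₁, …, s eₙ}`. -/
theorem exit_range_avoids_unique_cycle
    {V E : Type*} (s r : E → V) (v : V) (l : List E)
    (hl : IsClosedSimplePath s r v l)
    (huniq : ∀ m : List E, IsClosedSimplePath s r v m → m = l)
    (i : ℕ) (hi : i < l.length) (f : E) (hsf : s f = s l[i]) (hfl : f ∉ l) :
    ∀ j (hj : j < l.length), r f ≠ s l[j] := by
  intro j hj hrf
  obtain ⟨⟨hne, hchain, hsrc, hrng⟩, hsimp⟩ := hl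
  have hn : 0 < l.length := List.length_pos_iff.mpr hne
  have hsrc0 : s (l[0]'hn) = v := by
    have := hsrc hne; rwa [List.head_eq_getElem_zero] at this
  have hrngN : r (l[l.length - 1]'(by omega)) = v := by
    have := hrng hne; rwa [List.getLast_eq_getElem] at this
  have hrngN' : ∀ a (ha : a + 1 = l.length), r (l[a]'(by omega)) = v := by
    intro a ha
    have h2 : a = l.length - 1 := by omega
    subst h2; exact hrngN
  have hchain' : ∀ k (h : k + 1 < l.length), r (l[k]'(by omega)) = s l[k+1] := by
    intro k h
    have := List.isChain_iff_getElem.mp hchain k (by omega)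
    simpa using this
  have hchain2 : ∀ a b (hab : a + 1 = b) (hb : b < l.length),
      r (l[a]'(by omega)) = s l[b] := by
    intro a b hab hb; subst hab; exact hchain' a hb
  obtain ⟨j', hj'pos, hj'le, hrf', hrf0⟩ :
      ∃ j', 0 < j' ∧ j' ≤ l.length ∧
        (∀ a (ha : a < l.length), a = j' → r f = s l[a]) ∧
        (j' = l.length → r f = v) := by
    rcases Nat.eq_zero_or_pos j with h0 | h0
    · refine ⟨l.length, hn, le_refl _, fun a ha h => by omega, fun _ => ?_⟩
      subst h0; rw [hrf]; exact hsrc0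
    · exact ⟨j, h0, le_of_lt hj, fun a ha h => by subst h; exact hrf, fun h => by omega⟩
  set m := l.take i ++ f :: l.drop j' with hmdef
  have hmne : m ≠ [] := by simp [hmdef]
  have htlen : (l.take i).length = i := by
    rw [List.length_take]; omega
  have hmlen : m.length = i + 1 + (l.length - j') := by
    simp only [hmdef, List.length_append, List.length_cons, List.length_take,
      List.length_drop]
    omega
  have getm1 : ∀ k (hk : k < m.length) (hki : k < i), m[k] = l[k]'(by omega) := by
    intro k hk hki
    simp only [hmdef]
    rw [List.getElem_append_left (by rw [htlen]; omega), List.getElem_take]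
  have getm2 : ∀ k (hk : k < m.length) (hki : k = i), m[k] = f := by
    intro k hk hki
    subst hki
    simp only [hmdef]
    rw [List.getElem_append_right (by rw [htlen])]
    simp [htlen]
  have getm3 : ∀ k (hk : k < m.length) (hik : i < k),
      m[k] = l[j' + (k - i - 1)]'(by rw [hmlen] at hk; omega) := by
    intro k hk hik
    obtain ⟨d, hd⟩ : ∃ d, k - i = d + 1 := ⟨k - i - 1, by omega⟩
    simp only [hmdef]
    rw [List.getElem_append_right (by rw [htlen]; omega)]
    simp only [htlen, hd, List.getElem_cons_succ, List.getElem_drop,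
      Nat.add_sub_cancel]
  have hm : IsClosedSimplePath s r v m := by
    refine ⟨⟨hmne, ?_, ?_, ?_⟩, ?_⟩
    · -- path
      simp only [IsGraphPath]
      rw [List.Chain', List.isChain_iff_getElem]
      intro k hk
      rw [hmlen] at hk
      rcases lt_trichotomy k i with h | h | h
      · rcases lt_or_eq_of_le (by omega : k + 1 ≤ i) with h2 | h2
        · rw [getm1 k (by rw [hmlen]; omega) h, getm1 (k+1) (by rw [hmlen]; omega) h2]
          exact hchain2 k (k+1) rfl (by omega)
        · rw [getm1 k (by rw [hmlen]; omega) h, getm2 (k+1) (by rw [hmlen]; omega) h2, hsf]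
          exact hchain2 k i (by omega) hi
      · rw [getm2 k (by rw [hmlen]; omega) h, getm3 (k+1) (by rw [hmlen]; omega) (by omega)]
        exact hrf' _ (by omega) (by omega)
      · rw [getm3 k (by rw [hmlen]; omega) h, getm3 (k+1) (by rw [hmlen]; omega) (by omega)]
        exact hchain2 _ _ (by omega) (by omega)
    · -- src
      intro h
      rw [List.head_eq_getElem_zero]
      rcases Nat.eq_zero_or_pos i with h0 | h0
      · rw [getm2 0 (by rw [hmlen]; omega) h0.symm, hsf]
        subst h0
        exact hsrc0
      · rw [getm1 0 (by rw [hmlen]; omega) h0]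
        exact hsrc0
    · -- rng
      intro h
      rw [List.getLast_eq_getElem]
      rcases lt_or_eq_of_le hj'le with h2 | h2
      · rw [getm3 (m.length - 1) (by rw [hmlen]; omega) (by rw [hmlen]; omega)]
        exact hrngN' _ (by rw [hmlen]; omega)
      · rw [getm2 (m.length - 1) (by rw [hmlen]; omega) (by rw [hmlen]; omega)]
        exact hrf0 h2
    · -- simple
      intro k hk hkpos
      rcases lt_trichotomy k i with h | h | h
      · rw [getm1 k hk h]
        exact hsimp k (by omega) hkpos
      · rw [getm2 k hk h, hsf]
        exact hsimp i hi (by omega)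
      · rw [getm3 k hk h]
        exact hsimp _ (by rw [hmlen] at hk; omega) (by omega)
  have hme : m = l := huniq m hm
  have hfm : f ∈ m := by rw [hmdef]; exact List.mem_append_right _ List.mem_cons_self
  rw [hme] at hfm
  exact hfl hfm
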